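/- arXiv:2305.18590 — 2 statements merged into one kernel-verified Lean document; each statement's English description precedes it below -/
import Mathlib

section
/- Let d_N denote the Kobayashi distance on 𝔹^N given by d_N(z,w) = arccosh(√(|1-⟨z,w⟩|²/((1-‖z‖²)(1-‖w‖²)))). Suppose f : 𝔹^m → 𝔹^M satisfies: (i) d_M(f(z),f(w)) ≤ d_m(z,w) for all z,w ∈ 𝔹^m, and (ii) there is C > 0 with 1 - ‖f(z)‖ ≤ C(1-‖z‖) for all z ∈ 𝔹^m. Then for every unit vector v ∈ ∂𝔹^m, the curve t ↦ f(tanh(t)v), t ∈ [0,∞), is a (1,β)-quasi-geodesic for d_M, where β = (1/2)log(2C) + d_M(0, f(0)). -/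
noncomputable section

/-- The inverse hyperbolic cosine (not in Mathlib). -/
def arccosh (x : ℝ) : ℝ := Real.log (x + Real.sqrt (x ^ 2 - 1))

/-- The Kobayashi (complex hyperbolic) distance on the unit ball, explicit formula. -/
def kobDist (N : ℕ) (z w : EuclideanSpace ℂ (Fin N)) : ℝ :=
  arccosh (Real.sqrt
    (‖1 - (inner ℂ z w : ℂ)‖ ^ 2 / ((1 - ‖z‖ ^ 2) * (1 - ‖w‖ ^ 2))))

lemma my_arccosh_cosh {x : ℝ} (hx : 0 ≤ x) : arccosh (Real.cosh x) = x := by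
  unfold arccosh
  have h1 : Real.cosh x ^ 2 - 1 = Real.sinh x ^ 2 := by
    have := Real.cosh_sq_sub_sinh_sq x; linarith
  have hs : 0 ≤ Real.sinh x := by
    have := Real.sinh_nonneg_iff.mpr hx; exact this
  rw [h1, Real.sqrt_sq hs, Real.cosh_add_sinh, Real.log_exp]

lemma my_le_arccosh {c X : ℝ} (hc : 0 ≤ c) (h : Real.cosh c ≤ X) : c ≤ arccosh X := by
  have h1 : 1 ≤ Real.cosh c := Real.one_le_cosh c
  have hs : 0 ≤ Real.sinh c := Real.sinh_nonneg_iff.mpr hc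
  have h2 : Real.sqrt (Real.cosh c ^ 2 - 1) ≤ Real.sqrt (X ^ 2 - 1) := by
    apply Real.sqrt_le_sqrt; nlinarith
  have h3 : Real.exp c ≤ X + Real.sqrt (X ^ 2 - 1) := by
    rw [← Real.cosh_add_sinh]
    have : Real.sinh c = Real.sqrt (Real.cosh c ^ 2 - 1) := by
      rw [show Real.cosh c ^ 2 - 1 = Real.sinh c ^ 2 by nlinarith [Real.cosh_sq_sub_sinh_sq c],
        Real.sqrt_sq hs]
    nlinarith
  calc c = Real.log (Real.exp c) := (Real.log_exp c).symm
    _ ≤ Real.log (X + Real.sqrt (X ^ 2 - 1)) :=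
        Real.log_le_log (Real.exp_pos c) h3

lemma my_cosh_formula (A B : ℝ) :
    Real.cosh (A - B) = (1 - Real.tanh A * Real.tanh B) * (Real.cosh A * Real.cosh B) := by
  rw [Real.cosh_sub, Real.tanh_eq_sinh_div_cosh, Real.tanh_eq_sinh_div_cosh]
  have hA := (Real.cosh_pos A).ne'
  have hB := (Real.cosh_pos B).ne'
  field_simp

lemma my_one_sub_tanh_sq (A : ℝ) : 1 - Real.tanh A ^ 2 = 1 / Real.cosh A ^ 2 := by
  rw [Real.tanh_eq_sinh_div_cosh]
  have hA := (Real.cosh_pos A).ne'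
  field_simp
  exact Real.cosh_sq_sub_sinh_sq A

lemma my_kob_formula {N : ℕ} (z w : EuclideanSpace ℂ (Fin N)) (A B : ℝ)
    (hz : ‖z‖ = Real.tanh A) (hw : ‖w‖ = Real.tanh B) :
    kobDist N z w
      = arccosh (‖1 - (inner ℂ z w : ℂ)‖ * (Real.cosh A * Real.cosh B)) := by
  unfold kobDist
  congr 1
  rw [hz, hw, my_one_sub_tanh_sq, my_one_sub_tanh_sq]
  have hA := Real.cosh_pos A
  have hB := Real.cosh_pos B
  have habs : (0:ℝ) ≤ ‖1 - (inner ℂ z w : ℂ)‖ := norm_nonneg _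
  rw [show ‖1 - (inner ℂ z w : ℂ)‖ ^ 2 / (1 / Real.cosh A ^ 2 * (1 / Real.cosh B ^ 2))
      = (‖1 - (inner ℂ z w : ℂ)‖ * (Real.cosh A * Real.cosh B)) ^ 2 by
    field_simp]
  exact Real.sqrt_sq (by positivity)

lemma my_kob_symm {N : ℕ} (z w : EuclideanSpace ℂ (Fin N)) : kobDist N z w = kobDist N w z := by
  unfold kobDist
  rw [inner_conj_symm w z |>.symm]
  rw [show (1 - (starRingEnd ℂ) (inner ℂ z w : ℂ)) = (starRingEnd ℂ) (1 - (inner ℂ z w : ℂ)) by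
    rw [map_sub, map_one]]
  rw [Complex.norm_conj, mul_comm (1 - ‖w‖ ^ 2)]

lemma my_tanh_nonneg {s : ℝ} (hs : 0 ≤ s) : 0 ≤ Real.tanh s := by
  rw [Real.tanh_eq_sinh_div_cosh]
  exact div_nonneg (Real.sinh_nonneg_iff.mpr hs) (Real.cosh_pos s).le

lemma my_tanh_lt_one (s : ℝ) : Real.tanh s < 1 := by
  rw [Real.tanh_eq_sinh_div_cosh, div_lt_one (Real.cosh_pos s)]
  have h := Real.cosh_sub_sinh s
  nlinarith [Real.exp_pos (-s)]

lemma my_exists_tanh {r : ℝ} (h0 : 0 ≤ r) (h1 : r < 1) :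
    ∃ B : ℝ, 0 ≤ B ∧ Real.tanh B = r := by
  have hq1 : (1:ℝ) ≤ (1 + r) / (1 - r) := by
    rw [le_div_iff₀ (by linarith)]; linarith
  refine ⟨Real.log ((1 + r) / (1 - r)) / 2,
    div_nonneg (Real.log_nonneg hq1) (by norm_num), ?_⟩
  set B := Real.log ((1 + r) / (1 - r)) / 2 with hBdef
  have he : Real.exp B * Real.exp B = (1 + r) / (1 - r) := by
    rw [← Real.exp_add, hBdef]
    rw [show Real.log ((1 + r) / (1 - r)) / 2 + Real.log ((1 + r) / (1 - r)) / 2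
        = Real.log ((1 + r) / (1 - r)) by ring]
    exact Real.exp_log (by linarith)
  have he2 : Real.exp B * Real.exp B * (1 - r) = 1 + r := by
    rw [he, div_mul_cancel₀ _ (by linarith : (1:ℝ) - r ≠ 0)]
  have hep := Real.exp_pos B
  rw [Real.tanh_eq_sinh_div_cosh, Real.sinh_eq, Real.cosh_eq, Real.exp_neg]
  rw [div_eq_iff (by positivity)]
  field_simp
  nlinarith [he2]

lemma my_tanh_lower {B : ℝ} (hB : 0 ≤ B) : Real.exp (-(2 * B)) ≤ 1 - Real.tanh B := by
  have h1 : 1 - Real.tanh B = Real.exp (-B) / Real.cosh B := by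
    rw [Real.tanh_eq_sinh_div_cosh, eq_div_iff (Real.cosh_pos B).ne']
    rw [sub_mul, div_mul_cancel₀ _ (Real.cosh_pos B).ne', one_mul, Real.cosh_sub_sinh]
  have h2 : Real.cosh B ≤ Real.exp B := by
    rw [Real.cosh_eq]
    nlinarith [Real.exp_le_exp.mpr (neg_le_self hB), Real.exp_pos (-B)]
  have h3 : Real.exp (-(2 * B)) = Real.exp (-B) / Real.exp B := by
    rw [← Real.exp_sub]; ring_nf
  rw [h1, h3]
  exact div_le_div_of_nonneg_left (Real.exp_pos (-B)).le (Real.cosh_pos B) h2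

lemma my_tanh_upper {t : ℝ} (ht : 0 ≤ t) : 1 - Real.tanh t ≤ 2 * Real.exp (-(2 * t)) := by
  have h1 : 1 - Real.tanh t = Real.exp (-t) / Real.cosh t := by
    rw [Real.tanh_eq_sinh_div_cosh, eq_div_iff (Real.cosh_pos t).ne']
    rw [sub_mul, div_mul_cancel₀ _ (Real.cosh_pos t).ne', one_mul, Real.cosh_sub_sinh]
  have h2 : Real.exp t / 2 ≤ Real.cosh t := by
    rw [Real.cosh_eq]; nlinarith [Real.exp_pos (-t)]
  have h3 : 2 * Real.exp (-(2 * t)) = Real.exp (-t) / (Real.exp t / 2) := by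
    have h4 : Real.exp (-(2 * t)) * Real.exp t = Real.exp (-t) := by
      rw [← Real.exp_add]; congr 1; ring
    field_simp
    linarith [h4]
  rw [h1, h3]
  exact div_le_div_of_nonneg_left (Real.exp_pos (-t)).le (by positivity) h2

lemma my_inner_smul_self {m : ℕ} (v : EuclideanSpace ℂ (Fin m)) (hv : ‖v‖ = 1) (a b : ℝ) :
    (inner ℂ (a • v) (b • v) : ℂ) = ((a * b : ℝ) : ℂ) := by
  have h1 : (a : ℝ) • v = ((a : ℂ)) • v := by simp
  have h2 : (b : ℝ) • v = ((b : ℂ)) • v := by simp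
  rw [h1, h2, inner_smul_left, inner_smul_right, inner_self_eq_norm_sq_to_K, hv]
  push_cast
  simp [Complex.conj_ofReal]

lemma my_norm_smul {m : ℕ} (v : EuclideanSpace ℂ (Fin m)) (hv : ‖v‖ = 1) {a : ℝ}
    (ha : 0 ≤ a) : ‖a • v‖ = a := by
  rw [norm_smul, hv, mul_one, Real.norm_eq_abs, abs_of_nonneg ha]

lemma my_kob_line {m : ℕ} (v : EuclideanSpace ℂ (Fin m)) (hv : ‖v‖ = 1) {s t : ℝ}
    (hs : 0 ≤ s) (ht : 0 ≤ t) :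
    kobDist m (Real.tanh s • v) (Real.tanh t • v) = |s - t| := by
  rw [my_kob_formula _ _ s t (my_norm_smul v hv (my_tanh_nonneg hs))
    (my_norm_smul v hv (my_tanh_nonneg ht)), my_inner_smul_self v hv]
  have h1 : (1 : ℂ) - ((Real.tanh s * Real.tanh t : ℝ) : ℂ)
      = ((1 - Real.tanh s * Real.tanh t : ℝ) : ℂ) := by push_cast; ring
  have h2 : 0 ≤ 1 - Real.tanh s * Real.tanh t := by
    nlinarith [my_tanh_nonneg hs, my_tanh_nonneg ht, my_tanh_lt_one s, my_tanh_lt_one t]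
  rw [h1, Complex.norm_real, Real.norm_eq_abs, abs_of_nonneg h2, ← my_cosh_formula, ← Real.cosh_abs,
    my_arccosh_cosh (abs_nonneg _)]

lemma my_kob_ge {N : ℕ} (z w : EuclideanSpace ℂ (Fin N)) (A B : ℝ)
    (hzA : ‖z‖ = Real.tanh A) (hwB : ‖w‖ = Real.tanh B) :
    |A - B| ≤ kobDist N z w := by
  rw [my_kob_formula z w A B hzA hwB]
  apply my_le_arccosh (abs_nonneg _)
  rw [Real.cosh_abs, my_cosh_formula]
  have habs : 1 - Real.tanh A * Real.tanh B ≤ ‖1 - (inner ℂ z w : ℂ)‖ := by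
    have h1 : ‖(inner ℂ z w : ℂ)‖ ≤ ‖z‖ * ‖w‖ := by
      exact norm_inner_le_norm z w
    have h2 : ‖(1:ℂ)‖ - ‖(inner ℂ z w : ℂ)‖ ≤ ‖1 - (inner ℂ z w : ℂ)‖ :=
      norm_sub_norm_le _ _
    rw [norm_one] at h2
    rw [hzA, hwB] at h1
    linarith
  have hpos : (0:ℝ) < Real.cosh A * Real.cosh B :=
    mul_pos (Real.cosh_pos A) (Real.cosh_pos B)
  exact mul_le_mul_of_nonneg_right habs hpos.le

lemma my_kob_zero {N : ℕ} (w : EuclideanSpace ℂ (Fin N)) (B : ℝ) (hB : 0 ≤ B)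
    (hwB : ‖w‖ = Real.tanh B) : kobDist N 0 w = B := by
  rw [my_kob_formula 0 w 0 B (by simp [Real.tanh_zero]) hwB]
  rw [inner_zero_left, sub_zero, norm_one, one_mul, Real.cosh_zero, one_mul,
    my_arccosh_cosh hB]

theorem stmt_6 (m M : ℕ) (f : EuclideanSpace ℂ (Fin m) → EuclideanSpace ℂ (Fin M))
    (hmap : Set.MapsTo f (Metric.ball 0 1) (Metric.ball 0 1))
    (hnonincr : ∀ z ∈ Metric.ball (0 : EuclideanSpace ℂ (Fin m)) 1,
      ∀ w ∈ Metric.ball (0 : EuclideanSpace ℂ (Fin m)) 1,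
        kobDist M (f z) (f w) ≤ kobDist m z w)
    (C : ℝ) (hC : 0 < C)
    (hbdry : ∀ z ∈ Metric.ball (0 : EuclideanSpace ℂ (Fin m)) 1,
      1 - ‖f z‖ ≤ C * (1 - ‖z‖)) :
    ∀ v : EuclideanSpace ℂ (Fin m), ‖v‖ = 1 →
      ∀ s t : ℝ, 0 ≤ s → 0 ≤ t →
        |t - s| - ((1/2) * Real.log (2 * C) + kobDist M 0 (f 0)) ≤
          kobDist M (f (Real.tanh s • v)) (f (Real.tanh t • v)) ∧
        kobDist M (f (Real.tanh s • v)) (f (Real.tanh t • v)) ≤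
          |t - s| + ((1/2) * Real.log (2 * C) + kobDist M 0 (f 0)) := by
  intro v hv
  have h0mem : (0 : EuclideanSpace ℂ (Fin m)) ∈ Metric.ball (0 : EuclideanSpace ℂ (Fin m)) 1 :=
    Metric.mem_ball_self one_pos
  have hball : ∀ u : ℝ, 0 ≤ u → Real.tanh u • v ∈ Metric.ball (0 : EuclideanSpace ℂ (Fin m)) 1 := by
    intro u hu
    rw [mem_ball_zero_iff, my_norm_smul v hv (my_tanh_nonneg hu)]
    exact my_tanh_lt_one u
  have hfnorm : ∀ u : ℝ, 0 ≤ u → ‖f (Real.tanh u • v)‖ < 1 := fun u hu =>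
    mem_ball_zero_iff.mp (hmap (hball u hu))
  have hf0 : ‖f 0‖ < 1 := mem_ball_zero_iff.mp (hmap h0mem)
  obtain ⟨B0, hB00, hB0⟩ := my_exists_tanh (norm_nonneg (f 0)) hf0
  have hkz : kobDist M 0 (f 0) = B0 := my_kob_zero _ B0 hB00 hB0.symm
  -- B0 lower bound : exp (-(2*B0)) ≤ C
  have hB0lb : Real.exp (-(2 * B0)) ≤ C := by
    have h1 := my_tanh_lower hB00
    have h2 := hbdry 0 h0mem
    rw [norm_zero] at h2
    rw [hB0] at h1
    linarith
  have hbeta : 0 ≤ (1/2) * Real.log (2 * C) + B0 := by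
    have h1 : -(2 * B0) ≤ Real.log C := by
      rw [← Real.log_exp (-(2 * B0))]
      exact Real.log_le_log (Real.exp_pos _) hB0lb
    have h2 : Real.log (2 * C) = Real.log 2 + Real.log C :=
      Real.log_mul two_ne_zero hC.ne'
    have h3 : (0:ℝ) ≤ Real.log 2 := Real.log_nonneg one_le_two
    linarith
  -- key one-sided lower bound
  have key : ∀ s t : ℝ, 0 ≤ s → 0 ≤ t →
      (t - s) - ((1/2) * Real.log (2 * C) + B0) ≤
        kobDist M (f (Real.tanh s • v)) (f (Real.tanh t • v)) := by
    intro s t hs ht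
    obtain ⟨Bs, hBs0, hBs⟩ := my_exists_tanh (norm_nonneg _) (hfnorm s hs)
    obtain ⟨Bt, hBt0, hBt⟩ := my_exists_tanh (norm_nonneg _) (hfnorm t ht)
    -- Bs ≤ B0 + s
    have hup : kobDist M (f 0) (f (Real.tanh s • v)) ≤ s := by
      have h1 := hnonincr 0 h0mem _ (hball s hs)
      have h2 : kobDist m 0 (Real.tanh s • v) = s := by
        rw [show (0 : EuclideanSpace ℂ (Fin m)) = Real.tanh 0 • v by
          rw [Real.tanh_zero, zero_smul]]
        rw [my_kob_line v hv le_rfl hs, zero_sub, abs_neg, abs_of_nonneg hs]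
      linarith [h1, h2.le, h2.ge]
    have hBsub : Bs ≤ B0 + s := by
      have := my_kob_ge (f 0) (f (Real.tanh s • v)) B0 Bs hB0.symm hBs.symm
      have habs := abs_le.mp (le_refl |B0 - Bs|) |>.1
      have := neg_abs_le (B0 - Bs)
      nlinarith [abs_le.mp (le_of_eq (rfl : |B0 - Bs| = |B0 - Bs|))]
    -- Bt ≥ t - (1/2) log (2C)
    have hBtlb : t - (1/2) * Real.log (2 * C) ≤ Bt := by
      have h1 := my_tanh_lower hBt0
      have h2 := hbdry _ (hball t ht)
      rw [my_norm_smul v hv (my_tanh_nonneg ht)] at h2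
      have h3 := my_tanh_upper ht
      have h4 : Real.exp (-(2 * Bt)) ≤ 2 * C * Real.exp (-(2 * t)) := by
        rw [hBt] at h1; nlinarith [Real.exp_pos (-(2*t))]
      have h5 : -(2 * Bt) ≤ Real.log (2 * C) + -(2 * t) := by
        have := Real.log_le_log (Real.exp_pos (-(2 * Bt))) h4
        rwa [Real.log_exp, Real.log_mul (by positivity) (Real.exp_pos _).ne',
          Real.log_exp] at this
      linarith
    have hge := my_kob_ge (f (Real.tanh s • v)) (f (Real.tanh t • v)) Bs Bt
      hBs.symm hBt.symm
    have : Bt - Bs ≤ |Bs - Bt| := by rw [abs_sub_comm]; exact le_abs_self _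
    linarith
  intro s t hs ht
  rw [hkz]
  constructor
  · rcases abs_cases (t - s) with ⟨h, _⟩ | ⟨h, _⟩
    · rw [h]; exact key s t hs ht
    · rw [h]
      have := key t s ht hs
      rw [my_kob_symm] at this
      linarith
  · have h1 := hnonincr _ (hball s hs) _ (hball t ht)
    rw [my_kob_line v hv hs ht, abs_sub_comm] at h1
    linarith
end
end

section
/- Let g : ℂ^m → ℂ^M be holomorphic with g(0) = 0 and g(𝒫^m) ⊆ 𝒫^M, where 𝒫^N = {z : Im z₁ > Σ_{k≥2}|z_k|²}, and suppose g extends continuously to the closure and maps ∂𝒫^m near 0 into ∂𝒫^M. Then the Jacobian g'(0) maps the real hyperplane ℝ·(ie₁) + ℂe₂ + ⋯ + ℂe_m into ℝ·(ie₁') + ℂe₂' + ⋯ + ℂe_M', and maps ℂe₂ + ⋯ + ℂe_m into ℂe₂' + ⋯ + ℂe_M'; moreover ∂g₁/∂z₁(0) is real and positive and ∂g₁/∂z_k(0) = 0 for 2 ≤ k ≤ m. -/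
noncomputable section

/-- The Siegel upper half-space in `ℂ^{N+1}`. -/
def siegel (N : ℕ) : Set (EuclideanSpace ℂ (Fin (N+1))) :=
  {z | (z 0).im > ∑ k : Fin N, ‖z k.succ‖ ^ 2}

/-- The boundary of the Siegel upper half-space in `ℂ^{N+1}`. -/
def siegelBdry (N : ℕ) : Set (EuclideanSpace ℂ (Fin (N+1))) :=
  {z | (z 0).im = ∑ k : Fin N, ‖z k.succ‖ ^ 2}

open Filter Complex in
lemma aux_deriv_nonneg {u : ℝ → ℝ} {d : ℝ} (hu : HasDerivAt u d 0)
    (h0 : u 0 = 0) (hpos : ∀ t : ℝ, 0 < t → 0 ≤ u t) : 0 ≤ d := by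
  have h := (hu.hasDerivWithinAt (s := Set.Ioi 0))
  rw [hasDerivWithinAt_iff_tendsto_slope] at h
  have hs : Set.Ioi (0:ℝ) \ {0} = Set.Ioi 0 :=
    Set.diff_singleton_eq_self (by simp)
  rw [hs] at h
  refine ge_of_tendsto h ?_
  filter_upwards [self_mem_nhdsWithin] with t ht
  have ht' : (0:ℝ) < t := ht
  have hst : slope u 0 t = u t / t := by
    simp [slope, h0, div_eq_inv_mul]
  rw [hst]
  exact div_nonneg (hpos t ht') ht'.le

open Filter Complex in
lemma aux_strict {F : ℂ → ℂ} (hF : Differentiable ℂ F) (h0 : F 0 = 0)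
    (hmap : ∀ z : ℂ, 0 < z.im → 0 < (F z).im) : deriv F 0 ≠ 0 := by
  intro hder
  have hA : AnalyticAt ℂ F 0 := hF.analyticAt 0
  rcases eq_or_ne (analyticOrderAt F 0) ⊤ with htop | hfin
  · have hev : ∀ᶠ z in nhds (0:ℂ), F z = 0 := analyticOrderAt_eq_top.mp htop
    obtain ⟨ε, hε, hball⟩ := Metric.eventually_nhds_iff.mp hev
    have hz : F (Complex.I * (ε/2)) = 0 := by
      apply hball
      simp [dist_eq]
      rw [abs_of_pos hε]; linarith
    have := hmap (Complex.I * (ε/2)) (by simp; positivity)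
    rw [hz] at this; simp at this
  · obtain ⟨n, hn⟩ : ∃ n : ℕ, analyticOrderAt F 0 = n := by
      lift analyticOrderAt F 0 to ℕ using hfin with k hk
      exact ⟨k, rfl⟩
    obtain ⟨h, hhA, hh0, heq⟩ := hA.analyticOrderAt_eq_natCast.mp hn
    -- n ≠ 0
    have hn0 : n ≠ 0 := by
      intro h0n
      subst h0n
      have := heq.self_of_nhds
      simp [h0] at this
      exact hh0 this.symm
    -- n ≠ 1
    have hn1 : n ≠ 1 := by
      intro h1n
      subst h1n
      have hh : HasDerivAt h (deriv h 0) 0 := hhA.differentiableAt.hasDerivAt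
      have hd2 : HasDerivAt (fun z : ℂ => z * h z) (h 0) 0 := by
        have := (hasDerivAt_id (0:ℂ)).mul hh
        simp only [id] at this
        exact this.congr_deriv (by ring)
      have hd : HasDerivAt (fun z : ℂ => (z - 0) ^ 1 • h z) (h 0) 0 := by
        simpa using hd2
      have : deriv F 0 = h 0 := by
        rw [Filter.EventuallyEq.deriv_eq heq]
        exact hd.deriv
      exact hh0 (by rw [← this, hder])
    have hn2 : 2 ≤ n := by omega
    set b := h 0 with hbdef
    set A := b.arg with hAdef
    have hApi : A ≤ Real.pi := Complex.arg_le_pi b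
    have hAnpi : -Real.pi < A := Complex.neg_pi_lt_arg b
    set T : ℝ := if A < 0 then -A/2 else 3*Real.pi/2 - A with hTdef
    have pi_pos := Real.pi_pos
    have hT0 : 0 < T := by
      rw [hTdef]; split <;> [linarith; linarith]
    have hTub : T ≤ 3*Real.pi/2 := by
      rw [hTdef]; split <;> [linarith; linarith]
    have hTsin : Real.sin (T + A) < 0 := by
      rw [hTdef]; split
      · rename_i hA0
        rw [show -A/2 + A = A/2 by ring]
        apply Real.sin_neg_of_neg_of_neg_pi_lt <;> linarith
      · rw [show 3*Real.pi/2 - A + A = Real.pi + Real.pi/2 by ring]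
        rw [Real.sin_add]
        simp
    set θ : ℝ := T / n with hθdef
    have hnR : (2:ℝ) ≤ (n:ℝ) := by exact_mod_cast hn2
    have hθ0 : 0 < θ := div_pos hT0 (by linarith)
    have hθπ : θ < Real.pi := by
      have h1 : T / (n:ℝ) ≤ T / 2 := by
        apply div_le_div_of_nonneg_left hT0.le (by norm_num) hnR
      rw [hθdef]; linarith
    have hsθ : 0 < Real.sin θ := Real.sin_pos_of_pos_of_lt_pi hθ0 hθπ
    set c : ℂ := Complex.exp ((θ:ℂ) * Complex.I) with hcdef
    set φ : ℝ → ℝ := fun r => (Complex.exp ((T:ℂ) * Complex.I) * h ((r:ℂ) * c)).im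
      with hφdef
    have hccont : ContinuousAt (fun r : ℝ => (r:ℂ) * c) 0 := by fun_prop
    have hc0 : (fun r : ℝ => (r:ℂ) * c) 0 = 0 := by simp
    have hφcont : ContinuousAt φ 0 := by
      apply Complex.continuous_im.continuousAt.comp
      apply ContinuousAt.mul continuousAt_const
      refine ContinuousAt.comp ?_ hccont
      simp only [Complex.ofReal_zero, zero_mul]
      exact hhA.continuousAt
    have hφ0 : φ 0 < 0 := by
      have hb' : (‖b‖ : ℂ) * Complex.exp ((A:ℂ) * Complex.I) = b :=
        Complex.norm_mul_exp_arg_mul_I b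
      have key : Complex.exp ((T:ℂ) * Complex.I) * b
          = ((‖b‖ : ℝ):ℂ) * Complex.exp (((T + A : ℝ):ℂ) * Complex.I) := by
        conv_lhs => rw [← hb']
        rw [show (((T + A : ℝ)):ℂ) * Complex.I = (T:ℂ) * Complex.I + (A:ℂ) * Complex.I by
          push_cast; ring, Complex.exp_add]
        ring
      have hφ0eq : φ 0 = (Complex.exp ((T:ℂ) * Complex.I) * b).im := by
        rw [hφdef]
        norm_num [hbdef]
      have : φ 0 = ‖b‖ * Real.sin (T + A) := by
        rw [hφ0eq, key, Complex.im_ofReal_mul, Complex.exp_ofReal_mul_I_im]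
      rw [this]
      have hbabs : 0 < ‖b‖ := by
        simpa using norm_pos_iff.mpr hh0
      exact mul_neg_of_pos_of_neg hbabs hTsin
    have hev1 : ∀ᶠ r : ℝ in nhds 0, φ r < 0 :=
      hφcont.eventually_lt_const hφ0
    have hev2 : ∀ᶠ r : ℝ in nhds 0,
        F ((r:ℂ) * c) = ((r:ℂ) * c - 0) ^ n • h ((r:ℂ) * c) :=
      (hc0 ▸ hccont : Filter.Tendsto (fun r : ℝ => (r:ℂ) * c) (nhds 0) (nhds 0)).eventually heq
    obtain ⟨r, hrφ, hrF, hrpos⟩ :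
        ∃ r : ℝ, φ r < 0 ∧ F ((r:ℂ) * c) = ((r:ℂ) * c - 0) ^ n • h ((r:ℂ) * c) ∧ 0 < r := by
      have := ((hev1.and hev2).filter_mono (nhdsWithin_le_nhds (s := Set.Ioi (0:ℝ)))).and
        (eventually_mem_nhdsWithin (s := Set.Ioi (0:ℝ)))
      obtain ⟨r, ⟨h1, h2⟩, h3⟩ := this.exists
      exact ⟨r, h1, h2, h3⟩
    have him : 0 < ((r:ℂ) * c).im := by
      rw [hcdef, Complex.im_ofReal_mul, Complex.exp_ofReal_mul_I_im]
      positivity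
    have hpos := hmap _ him
    rw [hrF] at hpos
    have hcomp : ((((r:ℂ) * c - 0) ^ n) • h ((r:ℂ) * c)).im = r^n * φ r := by
      rw [sub_zero, smul_eq_mul, mul_pow]
      have hcn : c ^ n = Complex.exp ((T:ℂ) * Complex.I) := by
        rw [hcdef, ← Complex.exp_nat_mul]
        congr 1
        rw [show ((n:ℂ) * ((θ:ℂ) * Complex.I)) = (((n:ℝ) * θ : ℝ):ℂ) * Complex.I by
          push_cast; ring]
        congr 2
        rw [hθdef]
        field_simp
      rw [hcn, show ((r:ℂ))^n = ((r^n : ℝ):ℂ) by push_cast; ring, mul_assoc,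
        Complex.im_ofReal_mul]
    rw [hcomp] at hpos
    have : r^n * φ r < 0 := mul_neg_of_pos_of_neg (by positivity) hrφ
    linarith

open Filter Complex in
theorem stmt_12 (m M : ℕ)
    (g : EuclideanSpace ℂ (Fin (m+1)) → EuclideanSpace ℂ (Fin (M+1)))
    (hol : Differentiable ℂ g) (hg0 : g 0 = 0)
    (hmap : Set.MapsTo g (siegel m) (siegel M))
    (hbdry : ∃ ε > 0, ∀ z ∈ Metric.ball (0 : EuclideanSpace ℂ (Fin (m+1))) ε ∩ siegelBdry m,
      g z ∈ siegelBdry M) :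
    (∀ z : EuclideanSpace ℂ (Fin (m+1)), (z 0).re = 0 →
      ((fderiv ℂ g 0 z) 0).re = 0) ∧
    (∀ z : EuclideanSpace ℂ (Fin (m+1)), z 0 = 0 → (fderiv ℂ g 0 z) 0 = 0) ∧
    (((fderiv ℂ g 0 (EuclideanSpace.single 0 1)) 0).im = 0 ∧
      0 < ((fderiv ℂ g 0 (EuclideanSpace.single 0 1)) 0).re) ∧
    (∀ k : Fin m, (fderiv ℂ g 0 (EuclideanSpace.single k.succ 1)) 0 = 0) := by
  set L := fderiv ℂ g 0 with hLdef
  have hL : HasFDerivAt g L 0 := (hol 0).hasFDerivAt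
  -- key lemma A
  have keyA : ∀ v : EuclideanSpace ℂ (Fin (m+1)), 0 ≤ (v 0).im → 0 ≤ ((L v) 0).im := by
    intro v hv
    set S : ℝ := ∑ k : Fin m, ‖v k.succ‖ ^ 2 with hSdef
    set C : ℝ := S + 1 with hCdef
    set w : EuclideanSpace ℂ (Fin (m+1)) := EuclideanSpace.single 0 Complex.I with hwdef
    set γ : ℝ → EuclideanSpace ℂ (Fin (m+1)) := fun t => t • v + (C * t^2) • w with hγdef
    have hγ0 : γ 0 = 0 := by simp [hγdef]
    have hγd : HasDerivAt γ v 0 := by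
      have h1 : HasDerivAt (fun t : ℝ => t • v) ((1:ℝ) • v) 0 :=
        (hasDerivAt_id 0).smul_const v
      have hc : HasDerivAt (fun t : ℝ => C * t^2) (C * (2 * 0^1)) 0 :=
        (hasDerivAt_pow 2 (0:ℝ)).const_mul C
      have h2 := hc.smul_const w
      have h3 := h1.add h2
      simp only [one_smul, pow_one, mul_zero, zero_smul, add_zero] at h3
      exact h3
    have hγmem : ∀ t : ℝ, 0 < t → γ t ∈ siegel m := by
      intro t ht
      have hco0 : (γ t) 0 = t • (v 0) + (C * t^2) • Complex.I := by
        simp [hγdef, hwdef, EuclideanSpace.single_apply]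
      have hcok : ∀ k : Fin m, (γ t) k.succ = t • (v k.succ) := by
        intro k
        simp [hγdef, hwdef, EuclideanSpace.single_apply, (Fin.succ_ne_zero k)]
      show ((γ t) 0).im > ∑ k : Fin m, ‖(γ t) k.succ‖ ^ 2
      have him : ((γ t) 0).im = t * (v 0).im + C * t^2 := by
        rw [hco0, Complex.real_smul, Complex.real_smul, Complex.add_im,
          Complex.im_ofReal_mul, Complex.im_ofReal_mul, Complex.I_im, mul_one]
      have hsum : ∑ k : Fin m, ‖(γ t) k.succ‖ ^ 2 = t^2 * S := by
        rw [hSdef, Finset.mul_sum]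
        apply Finset.sum_congr rfl
        intro k _
        rw [hcok k, Complex.real_smul, norm_mul, mul_pow, Complex.norm_real, Real.norm_eq_abs, _root_.sq_abs]
      rw [him, hsum, hCdef]
      have h1 : 0 ≤ t * (v 0).im := mul_nonneg ht.le hv
      have h2 : 0 < t^2 := by positivity
      nlinarith
    have h1 : HasDerivAt (fun t => g (γ t)) (L v) 0 := by
      have hL' : HasFDerivAt g L (γ 0) := by rw [hγ0]; exact hL
      exact (hL'.restrictScalars ℝ).comp_hasDerivAt 0 hγd
    have h2 := ((EuclideanSpace.proj (0 : Fin (M+1))).restrictScalars ℝ).hasFDerivAt.comp_hasDerivAt 0 h1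
    have h3 := Complex.imCLM.hasFDerivAt.comp_hasDerivAt 0 h2
    have hud : HasDerivAt (fun t : ℝ => ((g (γ t)) 0).im) (((L v) 0).im) 0 := by
      exact h3
    refine aux_deriv_nonneg hud ?_ ?_
    · rw [hγ0, hg0]; simp
    · intro t ht
      have hmem := hmap (hγmem t ht)
      simp only [siegel, Set.mem_setOf_eq] at hmem
      have h5 : 0 ≤ ∑ k : Fin M, ‖(g (γ t)) k.succ‖ ^ 2 :=
        Finset.sum_nonneg fun k _ => by positivity
      exact le_of_lt (lt_of_le_of_lt h5 hmem)
  -- symmetric consequence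
  have hIm0 : ∀ v : EuclideanSpace ℂ (Fin (m+1)), (v 0).im = 0 → ((L v) 0).im = 0 := by
    intro v hv
    have h1 := keyA v (le_of_eq hv.symm)
    have h2 := keyA (-v) (by simp [hv])
    have h3 : ((L (-v)) 0).im = -(((L v) 0).im) := by
      rw [map_neg]
      simp
    rw [h3] at h2
    linarith
  have hResz : ∀ z : EuclideanSpace ℂ (Fin (m+1)), (z 0).re = 0 → ((L z) 0).re = 0 := by
    intro z hz
    have h1 : ((Complex.I • z) 0).im = 0 := by
      simp [Complex.mul_im, hz]
    have h2 := hIm0 _ h1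
    rw [map_smul] at h2
    simpa [Complex.mul_im] using h2
  have hPart2 : ∀ z : EuclideanSpace ℂ (Fin (m+1)), z 0 = 0 → (L z) 0 = 0 := by
    intro z hz
    have h1 := hIm0 z (by rw [hz]; simp)
    have h2 := hResz z (by rw [hz]; simp)
    exact Complex.ext h2 h1
  -- part 3
  set e₁ : EuclideanSpace ℂ (Fin (m+1)) := EuclideanSpace.single 0 1 with he₁def
  have he₁0 : e₁ 0 = 1 := by simp [he₁def, EuclideanSpace.single_apply]
  have hImA : ((L e₁) 0).im = 0 := hIm0 e₁ (by rw [he₁0]; simp)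
  have hReNN : 0 ≤ ((L e₁) 0).re := by
    have h1 := keyA (Complex.I • e₁) (by simp [he₁0])
    rw [map_smul] at h1
    simpa [Complex.mul_im] using h1
  -- strictness
  set F : ℂ → ℂ := fun t => (g (t • e₁)) 0 with hFdef
  have hFeq : F = fun t : ℂ => (EuclideanSpace.proj (0 : Fin (M+1))) (g (t • e₁)) := by
    funext t; simp [hFdef]
  have hsmd : Differentiable ℂ (fun t : ℂ => t • e₁) := by
    simpa using (differentiable_id (𝕜 := ℂ)).smul_const e₁
  have hFdiff : Differentiable ℂ F := by
    rw [hFeq]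
    exact (EuclideanSpace.proj (0 : Fin (M+1))).differentiable.comp (hol.comp hsmd)
  have hF0 : F 0 = 0 := by simp [hFdef, hg0]
  have hFd : HasDerivAt F ((L e₁) 0) 0 := by
    have hsd : HasDerivAt (fun t : ℂ => t • e₁) e₁ 0 := by
      simpa using (hasDerivAt_id (0:ℂ)).smul_const e₁
    have hL' : HasFDerivAt g L ((0:ℂ) • e₁) := by rw [zero_smul]; exact hL
    have h1 := hL'.comp_hasDerivAt 0 hsd
    have h2 := (EuclideanSpace.proj (0 : Fin (M+1))).hasFDerivAt.comp_hasDerivAt 0 h1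
    rw [hFeq]
    exact h2
  have hFmap : ∀ z : ℂ, 0 < z.im → 0 < (F z).im := by
    intro z hz
    have hmem : z • e₁ ∈ siegel m := by
      simp only [siegel, Set.mem_setOf_eq, PiLp.smul_apply, he₁def,
        EuclideanSpace.single_apply, smul_eq_mul]
      simpa [Fin.succ_ne_zero] using hz
    have h1 := hmap hmem
    simp only [siegel, Set.mem_setOf_eq] at h1
    have h5 : 0 ≤ ∑ k : Fin M, ‖(g (z • e₁)) k.succ‖ ^ 2 :=
      Finset.sum_nonneg fun k _ => by positivity
    exact lt_of_le_of_lt h5 h1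
  have hane : (L e₁) 0 ≠ 0 := by
    have := aux_strict hFdiff hF0 hFmap
    rw [hFd.deriv] at this
    exact this
  have hRepos : 0 < ((L e₁) 0).re := by
    rcases lt_or_eq_of_le hReNN with h | h
    · exact h
    · exact absurd (Complex.ext h.symm hImA) hane
  refine ⟨hResz, hPart2, ⟨hImA, hRepos⟩, ?_⟩
  intro k
  exact hPart2 _ (by simp [EuclideanSpace.single_apply, eq_comm, Fin.succ_ne_zero])
end
end
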